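/- Let ψ : [1, ∞) → ℝ satisfy ψ(1) = 0 and α ↦ ψ(α)/(α−1) monotone increasing, with D₁⁺ := inf_{α>1} ψ(α)/(α−1) > −∞ and D∞ := lim_{α→∞} ψ(α)/(α−1). Then Ψ⁻(c) := sup_{α≥1}{c(α−1) − ψ(α)} is strictly increasing in c on the interval (D₁⁺, D∞]. -/

import Mathlib

open Set

/-- Shifted Legendre–Fenchel transform `Ψ⁻(c) = sup_{α≥1} {c(α−1) − ψ(α)}`. -/
noncomputable def PsimE (ψ : ℝ → ℝ) (c : ℝ) : EReal :=
  ⨆ α ∈ Set.Ici (1 : ℝ), ((c * (α - 1) - ψ α : ℝ) : EReal)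

/-- `D∞ := lim_{α→∞} ψ(α)/(α−1)`, which equals the supremum by monotonicity. -/
noncomputable def DinfE (ψ : ℝ → ℝ) : EReal :=
  ⨆ α ∈ Set.Ioi (1 : ℝ), ((ψ α / (α - 1) : ℝ) : EReal)

/-- `Ψ⁻` is strictly increasing on `(D₁⁺, D∞]`. -/
theorem stmt12 (ψ : ℝ → ℝ) (hψ1 : ψ 1 = 0)
    (hmono : MonotoneOn (fun α => ψ α / (α - 1)) (Set.Ioi (1 : ℝ)))
    (hbdd : BddBelow ((fun α => ψ α / (α - 1)) '' Set.Ioi (1 : ℝ))) :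
    StrictMonoOn (fun c : ℝ => PsimE ψ c)
      {c : ℝ | sInf ((fun α => ψ α / (α - 1)) '' Set.Ioi (1 : ℝ)) < c ∧
        (c : EReal) ≤ DinfE ψ} := by
  intro c₁ hc₁ c₂ hc₂ hlt
  obtain ⟨hM₁, hD₁⟩ := hc₁
  obtain ⟨hM₂, hD₂⟩ := hc₂
  set M := sInf ((fun α => ψ α / (α - 1)) '' Set.Ioi (1 : ℝ)) with hMdef
  have hne : ((fun α => ψ α / (α - 1)) '' Set.Ioi (1 : ℝ)).Nonempty :=
    ⟨ψ 2 / (2 - 1), ⟨2, by norm_num, rfl⟩⟩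
  -- β with ψβ/(β−1) < c₁
  obtain ⟨y, ⟨β, hβ, rfl⟩, hy⟩ := exists_lt_of_csInf_lt hne hM₁
  have hβ1 : (1 : ℝ) < β := hβ
  -- α₀ with ψα₀/(α₀−1) > c₁
  have hc₁D : (c₁ : EReal) < DinfE ψ :=
    lt_of_lt_of_le (by exact_mod_cast hlt) hD₂
  rw [DinfE] at hc₁D
  simp only [lt_iSup_iff] at hc₁D
  obtain ⟨α₀, hα₀mem, hr⟩ := hc₁D
  have hα₀1 : (1 : ℝ) < α₀ := hα₀mem
  have hr' : c₁ < ψ α₀ / (α₀ - 1) := by exact_mod_cast hr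
  have hMc₁ : M < c₁ := hM₁
  -- upper bound: PsimE ψ c₁ ≤ B
  set B : ℝ := (α₀ - 1) * (c₁ - M) with hBdef
  have hub : PsimE ψ c₁ ≤ (B : EReal) := by
    refine iSup₂_le fun α hα => ?_
    rw [EReal.coe_le_coe_iff]
    rcases eq_or_lt_of_le (mem_Ici.mp hα) with h1 | h1
    · rw [← h1]
      simp only [hψ1, sub_self, mul_zero, zero_sub, neg_zero]
      nlinarith
    · have hα1 : 0 < α - 1 := by linarith
      have hMle : M ≤ ψ α / (α - 1) := csInf_le hbdd ⟨α, h1, rfl⟩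
      have key : c₁ * (α - 1) - ψ α = (α - 1) * (c₁ - ψ α / (α - 1)) := by
        field_simp
      rcases le_or_gt α α₀ with hcase | hcase
      · rw [key]
        nlinarith
      · have hmo : ψ α₀ / (α₀ - 1) ≤ ψ α / (α - 1) :=
          hmono hα₀mem (mem_Ioi.2 (lt_trans hα₀1 hcase)) (le_of_lt hcase)
        rw [key]
        nlinarith
  -- lower bound: positive value at β
  have hβ1' : 0 < β - 1 := by linarith
  set η : ℝ := c₁ * (β - 1) - ψ β with hηdef
  have hηpos : 0 < η := by
    have : ψ β < c₁ * (β - 1) := by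
      rw [div_lt_iff₀ hβ1'] at hy; linarith
    linarith
  have hlb : (η : EReal) ≤ PsimE ψ c₁ := by
    exact le_iSup₂_of_le β (le_of_lt hβ1) (le_refl _)
  -- finiteness
  have hne_top : PsimE ψ c₁ ≠ ⊤ :=
    ne_top_of_le_ne_top (EReal.coe_ne_top B) hub
  have hne_bot : PsimE ψ c₁ ≠ ⊥ := by
    intro h
    rw [h] at hlb
    exact (EReal.bot_lt_coe η).not_ge hlb
  set L : ℝ := (PsimE ψ c₁).toReal with hLdef
  have hL : (L : EReal) = PsimE ψ c₁ := EReal.coe_toReal hne_top hne_bot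
  have hηL : η ≤ L := by
    rw [← hL] at hlb; exact_mod_cast hlb
  -- choose δ
  have hMc₁' : 0 < c₁ - M := by linarith
  set t : ℝ := (η / 2) / (c₁ - M) with htdef
  have htpos : 0 < t := div_pos (by linarith) hMc₁'
  have hc : 0 < c₂ - c₁ := by linarith
  set δ : ℝ := min (η / 2) ((c₂ - c₁) * t / 2) with hδdef
  have hδpos : 0 < δ := lt_min (by linarith) (by positivity)
  have hδ1 : δ ≤ η / 2 := min_le_left _ _
  have hδ2 : δ ≤ (c₂ - c₁) * t / 2 := min_le_right _ _
  -- approximate optimizer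
  have hlt' : ((L - δ : ℝ) : EReal) < PsimE ψ c₁ := by
    rw [← hL]
    exact_mod_cast sub_lt_self L hδpos
  rw [PsimE] at hlt'
  simp only [lt_iSup_iff] at hlt'
  obtain ⟨α, hαmem, hv⟩ := hlt'
  have hα : (1 : ℝ) ≤ α := hαmem
  have hv' : L - δ < c₁ * (α - 1) - ψ α := by exact_mod_cast hv
  have hvpos : η / 2 < c₁ * (α - 1) - ψ α := by
    have : η - δ ≤ L - δ := by linarith
    linarith
  -- α > 1
  have hα1 : (1 : ℝ) < α := by
    rcases eq_or_lt_of_le hα with h1 | h1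
    · exfalso
      rw [← h1] at hvpos
      simp only [hψ1, sub_self, mul_zero, zero_sub, neg_zero] at hvpos
      linarith
    · exact h1
  have hα1' : 0 < α - 1 := by linarith
  have hMle : M ≤ ψ α / (α - 1) := csInf_le hbdd ⟨α, hα1, rfl⟩
  have key : c₁ * (α - 1) - ψ α = (α - 1) * (c₁ - ψ α / (α - 1)) := by
    field_simp
  -- slope bound : α - 1 ≥ t
  have hslope : t ≤ α - 1 := by
    rw [key] at hvpos
    have h1 : c₁ - ψ α / (α - 1) ≤ c₁ - M := by linarith
    have h2 : η / 2 < (α - 1) * (c₁ - M) := by nlinarith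
    rw [htdef, div_le_iff₀ hMc₁']
    linarith
  -- conclude
  have hfin : L < c₂ * (α - 1) - ψ α := by
    have h3 : c₂ * (α - 1) - ψ α = (c₁ * (α - 1) - ψ α) + (c₂ - c₁) * (α - 1) := by ring
    have h4 : (c₂ - c₁) * t ≤ (c₂ - c₁) * (α - 1) :=
      mul_le_mul_of_nonneg_left hslope (le_of_lt hc)
    rw [h3]
    have : L - δ + (c₂ - c₁) * t < c₁ * (α - 1) - ψ α + (c₂ - c₁) * (α - 1) := by linarith
    linarith
  have hfinal : PsimE ψ c₁ < PsimE ψ c₂ := by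
    rw [← hL]
    calc ((L : ℝ) : EReal) < ((c₂ * (α - 1) - ψ α : ℝ) : EReal) := by exact_mod_cast hfin
      _ ≤ PsimE ψ c₂ := le_iSup₂_of_le α hα (le_refl _)
  exact hfinal
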